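/- Shearer's Lemma: Let X_1, ..., X_n be discrete random variables, and let S_1, ..., S_m be subsets of {1, ..., n} such that every element i in {1, ..., n} belongs to at least k of these subsets (k ≥ 1). Then k · H(X_1, ..., X_n) ≤ Σ_{j=1}^m H(X_{S_j}), where X_S denotes the random vector (X_i)_{i ∈ S}. -/

import Mathlib

/-- The Shannon entropy (in nats) of the discrete random variable `X` defined on the
finite probability space `(Ω, μ)`, with the convention `0 · log 0 = 0`
(automatic in Lean since `Real.log 0 = 0`). -/
noncomputable def entropy {Ω β : Type*} [Fintype Ω] [DecidableEq β]
    (μ : Ω → ℝ) (X : Ω → β) : ℝ :=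
  -∑ b ∈ Finset.univ.image X,
      ((∑ ω ∈ Finset.univ.filter (fun ω => X ω = b), μ ω) *
        Real.log (∑ ω ∈ Finset.univ.filter (fun ω => X ω = b), μ ω))

namespace ShearerAux

open Finset

variable {Ω : Type*} [Fintype Ω] (μ : Ω → ℝ)

noncomputable def pr {β : Type*} [DecidableEq β] (X : Ω → β) (b : β) : ℝ :=
  ∑ ω ∈ Finset.univ.filter (fun ω => X ω = b), μ ω

variable {β γ δ : Type*} [DecidableEq β] [DecidableEq γ] [DecidableEq δ]

lemma pr_nonneg (hμ0 : ∀ ω, 0 ≤ μ ω) (X : Ω → β) (b : β) : 0 ≤ pr μ X b :=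
  Finset.sum_nonneg fun ω _ => hμ0 ω

lemma le_pr (hμ0 : ∀ ω, 0 ≤ μ ω) (X : Ω → β) (ω : Ω) : μ ω ≤ pr μ X (X ω) :=
  Finset.single_le_sum (fun ω _ => hμ0 ω) (by simp)

lemma pr_pos (hμ0 : ∀ ω, 0 ≤ μ ω) (X : Ω → β) {ω : Ω} (h : 0 < μ ω) :
    0 < pr μ X (X ω) := lt_of_lt_of_le h (le_pr μ hμ0 X ω)

/-- entropy as a sum over the sample space. -/
lemma entropy_eq (X : Ω → β) :
    entropy μ X = -∑ ω, μ ω * Real.log (pr μ X (X ω)) := by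
  rw [entropy, neg_inj]
  rw [← Finset.sum_fiberwise_of_maps_to (g := X) (t := Finset.univ.image X)
    (fun ω _ => Finset.mem_image_of_mem X (mem_univ ω)) (fun ω => μ ω * Real.log (pr μ X (X ω)))]
  refine Finset.sum_congr rfl fun b hb => ?_
  calc (∑ ω ∈ Finset.univ.filter (fun ω => X ω = b), μ ω) *
        Real.log (∑ ω ∈ Finset.univ.filter (fun ω => X ω = b), μ ω)
      = ∑ ω ∈ Finset.univ.filter (fun ω => X ω = b), μ ω * Real.log (pr μ X b) :=
        Finset.sum_mul ..
    _ = ∑ ω ∈ Finset.univ.filter (fun ω => X ω = b), μ ω * Real.log (pr μ X (X ω)) :=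
        Finset.sum_congr rfl fun ω hω => by rw [(Finset.mem_filter.mp hω).2]

end ShearerAux

namespace ShearerAux
open Finset
variable {Ω : Type*} [Fintype Ω] (μ : Ω → ℝ)
variable {β γ δ : Type*} [DecidableEq β] [DecidableEq γ] [DecidableEq δ]

/-- If `Y`'s fibers refine... i.e. Y is a function of X at the fiber level, then H(Y) ≤ H(X). -/
lemma entropy_mono (hμ0 : ∀ ω, 0 ≤ μ ω) (X : Ω → β) (Y : Ω → γ)
    (h : ∀ ω ω', X ω = X ω' → Y ω = Y ω') :
    entropy μ Y ≤ entropy μ X := by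
  rw [entropy_eq, entropy_eq, neg_le_neg_iff]
  refine Finset.sum_le_sum fun ω _ => ?_
  rcases eq_or_lt_of_le (hμ0 ω) with h0 | h0
  · simp [← h0]
  · refine mul_le_mul_of_nonneg_left ?_ (hμ0 ω)
    refine Real.log_le_log (pr_pos μ hμ0 X h0) ?_
    refine Finset.sum_le_sum_of_subset_of_nonneg ?_ (fun ω' _ _ => hμ0 ω')
    intro ω' hω'
    simp only [Finset.mem_filter, Finset.mem_univ, true_and] at hω' ⊢
    exact h ω' ω hω'

lemma entropy_congr (hμ0 : ∀ ω, 0 ≤ μ ω) (X : Ω → β) (Y : Ω → γ)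
    (h : ∀ ω ω', X ω = X ω' ↔ Y ω = Y ω') :
    entropy μ X = entropy μ Y :=
  le_antisymm (entropy_mono μ hμ0 Y X fun ω ω' e => (h ω ω').mpr e)
    (entropy_mono μ hμ0 X Y fun ω ω' e => (h ω ω').mp e)

lemma entropy_const (hμ1 : ∑ ω, μ ω = 1) (X : Ω → β)
    (h : ∀ ω ω', X ω = X ω') : entropy μ X = 0 := by
  rw [entropy_eq]
  have : ∀ ω : Ω, pr μ X (X ω) = 1 := by
    intro ω
    rw [← hμ1, pr]
    congr 1
    refine Finset.filter_true_of_mem fun ω' _ => h ω' ω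
  simp [this]

/-- total probability over the image is 1. -/
lemma pr_total (hμ1 : ∑ ω, μ ω = 1) (X : Ω → β) :
    ∑ b ∈ Finset.univ.image X, pr μ X b = 1 := by
  rw [← hμ1]
  exact Finset.sum_fiberwise_of_maps_to (fun ω _ => Finset.mem_image_of_mem X (mem_univ ω)) μ

end ShearerAux

namespace ShearerAux
open Finset
variable {Ω : Type*} [Fintype Ω] (μ : Ω → ℝ)
variable {β γ δ : Type*} [DecidableEq β] [DecidableEq γ] [DecidableEq δ]

lemma pr_pair_le_snd (hμ0 : ∀ ω, 0 ≤ μ ω) (X : Ω → β) (Z : Ω → δ) (u : β × δ) :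
    pr μ (fun ω => (X ω, Z ω)) u ≤ pr μ Z u.2 := by
  refine Finset.sum_le_sum_of_subset_of_nonneg ?_ fun ω _ _ => hμ0 ω
  intro ω hω
  simp only [Finset.mem_filter, Finset.mem_univ, true_and, Prod.ext_iff] at hω ⊢
  exact hω.2

lemma pr_slice (X : Ω → γ) (Z : Ω → δ) (z : δ) :
    ∑ v ∈ (Finset.univ.image (fun ω => (X ω, Z ω))).filter (fun v => v.2 = z),
      pr μ (fun ω => (X ω, Z ω)) v = pr μ Z z := by
  have h := Finset.sum_fiberwise_of_maps_to (s := Finset.univ.filter (fun ω => Z ω = z))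
    (g := fun ω => (X ω, Z ω))
    (t := (Finset.univ.image (fun ω => (X ω, Z ω))).filter (fun v => v.2 = z))
    (fun ω hω => by
      simp only [Finset.mem_filter, Finset.mem_univ, true_and] at hω ⊢
      exact ⟨Finset.mem_image_of_mem _ (mem_univ ω), hω⟩) μ
  rw [pr, ← h]
  refine Finset.sum_congr rfl fun v hv => ?_
  simp only [Finset.mem_filter, Finset.mem_univ, true_and] at hv
  rw [pr]
  congr 1
  ext ω
  simp only [Finset.mem_filter, Finset.mem_univ, true_and]
  constructor
  · intro h2
    exact ⟨by rw [← hv.2, ← h2], h2⟩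
  · exact fun h2 => h2.2

lemma entropy_submodular (hμ0 : ∀ ω, 0 ≤ μ ω) (hμ1 : ∑ ω, μ ω = 1)
    (X : Ω → β) (Y : Ω → γ) (Z : Ω → δ) :
    entropy μ (fun ω => (X ω, Y ω, Z ω)) + entropy μ Z ≤
      entropy μ (fun ω => (X ω, Z ω)) + entropy μ (fun ω => (Y ω, Z ω)) := by
  classical
  set W : Ω → β × γ × δ := fun ω => (X ω, Y ω, Z ω) with hW
  set XZ : Ω → β × δ := fun ω => (X ω, Z ω) with hXZ
  set YZ : Ω → γ × δ := fun ω => (Y ω, Z ω) with hYZ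
  -- pointwise probabilities
  set pW : Ω → ℝ := fun ω => pr μ W (W ω)
  set pXZ : Ω → ℝ := fun ω => pr μ XZ (XZ ω)
  set pYZ : Ω → ℝ := fun ω => pr μ YZ (YZ ω)
  set pZ : Ω → ℝ := fun ω => pr μ Z (Z ω)
  set r : Ω → ℝ := fun ω => pXZ ω * pYZ ω / (pW ω * pZ ω) with hr
  have key : ∑ ω, μ ω * r ω ≤ 1 := by
    -- group by fiber of W
    have hgroup := Finset.sum_fiberwise_of_maps_to (s := (Finset.univ : Finset Ω))
      (g := W) (t := Finset.univ.image W)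
      (fun ω _ => Finset.mem_image_of_mem W (mem_univ ω)) (fun ω => μ ω * r ω)
    rw [← hgroup]
    -- each fiber's contribution is at most Q b
    have hfiber : ∀ b ∈ Finset.univ.image W,
        ∑ ω ∈ Finset.univ.filter (fun ω => W ω = b), μ ω * r ω ≤
          pr μ XZ (b.1, b.2.2) * pr μ YZ (b.2.1, b.2.2) / pr μ Z b.2.2 := by
      intro b _
      have hconst : ∀ ω ∈ Finset.univ.filter (fun ω => W ω = b), μ ω * r ω =
          μ ω * (pr μ XZ (b.1, b.2.2) * pr μ YZ (b.2.1, b.2.2) / (pr μ W b * pr μ Z b.2.2)) := by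
        intro ω hω
        simp only [Finset.mem_filter, Finset.mem_univ, true_and] at hω
        have hx : XZ ω = (b.1, b.2.2) := by rw [hXZ]; rw [hW] at hω; simp [← hω]
        have hy : YZ ω = (b.2.1, b.2.2) := by rw [hYZ]; rw [hW] at hω; simp [← hω]
        have hz : Z ω = b.2.2 := by rw [hW] at hω; simp [← hω]
        simp only [hr, pXZ, pYZ, pW, pZ, hx, hy, hz, hω]
      rw [Finset.sum_congr rfl hconst, ← Finset.sum_mul]
      have hsum : ∑ ω ∈ Finset.univ.filter (fun ω => W ω = b), μ ω = pr μ W b := rfl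
      rw [hsum]
      rcases eq_or_lt_of_le (pr_nonneg μ hμ0 W b) with h0 | h0
      · rw [← h0, zero_mul]
        have h1 := pr_nonneg μ hμ0 XZ (b.1, b.2.2)
        have h2 := pr_nonneg μ hμ0 YZ (b.2.1, b.2.2)
        have h3 := pr_nonneg μ hμ0 Z b.2.2
        positivity
      · have hWZ : pr μ W b ≤ pr μ Z b.2.2 := by
          refine Finset.sum_le_sum_of_subset_of_nonneg ?_ fun ω _ _ => hμ0 ω
          intro ω hω
          simp only [Finset.mem_filter, Finset.mem_univ, true_and] at hω ⊢
          rw [← hω]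
        have hz0 : 0 < pr μ Z b.2.2 := lt_of_lt_of_le h0 hWZ
        have h2 : pr μ W b * (pr μ XZ (b.1, b.2.2) * pr μ YZ (b.2.1, b.2.2) /
            (pr μ W b * pr μ Z b.2.2)) =
            pr μ XZ (b.1, b.2.2) * pr μ YZ (b.2.1, b.2.2) / pr μ Z b.2.2 := by
          field_simp
        exact le_of_eq h2
    refine le_trans (Finset.sum_le_sum hfiber) ?_
    -- now bound the sum over the image of W by the sum over slices
    set Q : (β × δ) × γ × δ → ℝ := fun uv => pr μ XZ uv.1 * pr μ YZ uv.2 / pr μ Z uv.1.2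
    set φ : β × γ × δ → (β × δ) × γ × δ := fun b => ((b.1, b.2.2), (b.2.1, b.2.2))
    have hinj : Set.InjOn φ (Finset.univ.image W : Finset (β × γ × δ)) := by
      intro a _ b _ hab
      simp only [φ, Prod.ext_iff] at hab
      obtain ⟨⟨h1, h2⟩, h3, _⟩ := hab
      exact Prod.ext h1 (Prod.ext h3 h2)
    have himg : ∑ b ∈ Finset.univ.image W,
        pr μ XZ (b.1, b.2.2) * pr μ YZ (b.2.1, b.2.2) / pr μ Z b.2.2 =
        ∑ uv ∈ (Finset.univ.image W).image φ, Q uv := by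
      rw [Finset.sum_image (fun a ha b hb h => hinj ha hb h)]
    rw [himg]
    have hsubset : (Finset.univ.image W).image φ ⊆
        ((Finset.univ.image XZ) ×ˢ (Finset.univ.image YZ)).filter
          (fun uv => uv.1.2 = uv.2.2) := by
      intro uv huv
      simp only [Finset.mem_image] at huv
      obtain ⟨b, hb, rfl⟩ := huv
      simp only [Finset.mem_image, Finset.mem_univ, true_and] at hb
      obtain ⟨ω, rfl⟩ := hb
      simp only [Finset.mem_filter, Finset.mem_product, Finset.mem_image, Finset.mem_univ,
        true_and, φ]
      exact ⟨⟨⟨ω, rfl⟩, ⟨ω, rfl⟩⟩, trivial⟩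
    refine le_trans (Finset.sum_le_sum_of_subset_of_nonneg hsubset
      (fun uv _ _ => by
        have := pr_nonneg μ hμ0 XZ uv.1
        have := pr_nonneg μ hμ0 YZ uv.2
        have := pr_nonneg μ hμ0 Z uv.1.2
        positivity)) ?_
    -- compute sum over the filtered product
    rw [Finset.sum_filter, Finset.sum_product]
    have hrow : ∀ u ∈ Finset.univ.image XZ,
        (∑ v ∈ Finset.univ.image YZ, if u.2 = v.2 then Q (u, v) else 0) = pr μ XZ u := by
      intro u _
      have : ∀ v ∈ Finset.univ.image YZ, (if u.2 = v.2 then Q (u, v) else 0) =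
          (if v.2 = u.2 then pr μ XZ u / pr μ Z u.2 * pr μ YZ v else 0) := by
        intro v _
        by_cases h : v.2 = u.2
        · simp only [h, if_true, if_pos rfl, Q]
          ring
        · rw [if_neg (fun e => h e.symm), if_neg h]
      rw [Finset.sum_congr rfl this, ← Finset.sum_filter, ← Finset.mul_sum,
        pr_slice μ Y Z u.2]
      rcases eq_or_lt_of_le (pr_nonneg μ hμ0 Z u.2) with h0 | h0
      · have : pr μ XZ u = 0 := le_antisymm (h0 ▸ pr_pair_le_snd μ hμ0 X Z u)
          (pr_nonneg μ hμ0 XZ u)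
        simp [this]
      · rw [div_mul_cancel₀ _ (ne_of_gt h0)]
    rw [Finset.sum_congr rfl hrow, pr_total μ hμ1 XZ]
  -- termwise log inequality
  rw [entropy_eq, entropy_eq, entropy_eq, entropy_eq]
  rw [← neg_add, ← neg_add, neg_le_neg_iff, ← Finset.sum_add_distrib, ← Finset.sum_add_distrib]
  have : ∀ ω ∈ (Finset.univ : Finset Ω),
      μ ω * Real.log (pXZ ω) + μ ω * Real.log (pYZ ω) ≤
      μ ω * Real.log (pW ω) + μ ω * Real.log (pZ ω) + μ ω * (r ω - 1) := by
    intro ω _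
    rcases eq_or_lt_of_le (hμ0 ω) with h0 | h0
    · simp [← h0]
    · have hW0 : 0 < pW ω := pr_pos μ hμ0 W h0
      have hXZ0 : 0 < pXZ ω := pr_pos μ hμ0 XZ h0
      have hYZ0 : 0 < pYZ ω := pr_pos μ hμ0 YZ h0
      have hZ0 : 0 < pZ ω := pr_pos μ hμ0 Z h0
      have hlog : Real.log (pXZ ω) + Real.log (pYZ ω) -
          (Real.log (pW ω) + Real.log (pZ ω)) ≤ r ω - 1 := by
        have hr1 : 0 < r ω := by rw [hr]; positivity
        have := Real.log_le_sub_one_of_pos hr1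
        rw [hr, Real.log_div (by positivity) (by positivity),
          Real.log_mul (ne_of_gt hXZ0) (ne_of_gt hYZ0),
          Real.log_mul (ne_of_gt hW0) (ne_of_gt hZ0)] at this
        linarith
      nlinarith [hlog, h0]
  refine le_trans (Finset.sum_le_sum this) ?_
  rw [Finset.sum_add_distrib]
  have : ∑ ω, μ ω * (r ω - 1) ≤ 0 := by
    have hsplit : ∑ ω, μ ω * (r ω - 1) = (∑ ω, μ ω * r ω) - ∑ ω, μ ω := by
      rw [← Finset.sum_sub_distrib]
      exact Finset.sum_congr rfl fun ω _ => by ring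
    rw [hsplit, hμ1]
    linarith [key]
  linarith [this]

end ShearerAux

namespace ShearerAux
open Finset

variable {Ω : Type*} [Fintype Ω] {n : ℕ} {α : Fin n → Type*} [∀ i, DecidableEq (α i)]

/-- entropy of the sub-tuple indexed by `A`. -/
noncomputable def F (μ : Ω → ℝ) (X : ∀ i, Ω → α i) (A : Finset (Fin n)) : ℝ :=
  entropy μ (fun ω (i : A) => X i.1 ω)

variable (μ : Ω → ℝ) (X : ∀ i, Ω → α i)

lemma F_mono (hμ0 : ∀ ω, 0 ≤ μ ω) {A B : Finset (Fin n)} (hAB : A ⊆ B) :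
    F μ X A ≤ F μ X B :=
  entropy_mono μ hμ0 _ _ (fun ω ω' e => funext fun i => congrFun e ⟨i.1, hAB i.2⟩)

lemma F_empty (hμ1 : ∑ ω, μ ω = 1) : F μ X ∅ = 0 :=
  entropy_const μ hμ1 _ (fun ω ω' => funext fun i => absurd i.2 (Finset.notMem_empty i.1))

lemma F_insert_sub (hμ0 : ∀ ω, 0 ≤ μ ω) (hμ1 : ∑ ω, μ ω = 1) (i : Fin n)
    {A B : Finset (Fin n)} (hAB : A ⊆ B) :
    F μ X (insert i B) + F μ X A ≤ F μ X (insert i A) + F μ X B := by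
  have e1 : F μ X (insert i B) =
      entropy μ (fun ω => (X i ω, (fun j : B => X j.1 ω, fun j : A => X j.1 ω))) := by
    refine entropy_congr μ hμ0 _ _ fun ω ω' => ⟨fun e => ?_, fun e => ?_⟩
    · refine Prod.ext (congrFun e ⟨i, Finset.mem_insert_self i B⟩) (Prod.ext ?_ ?_)
      · exact funext fun j => congrFun e ⟨j.1, Finset.mem_insert_of_mem j.2⟩
      · exact funext fun j => congrFun e ⟨j.1, Finset.mem_insert_of_mem (hAB j.2)⟩
    · have h1 : X i ω = X i ω' := congrArg Prod.fst e
      have h2 : (fun j : B => X j.1 ω) = (fun j : B => X j.1 ω') :=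
        congrArg (fun p => p.2.1) e
      refine funext fun j => ?_
      obtain ⟨j, hj⟩ := j
      rcases Finset.mem_insert.mp hj with rfl | hjB
      · exact h1
      · exact congrFun h2 ⟨j, hjB⟩
  have e2 : F μ X (insert i A) =
      entropy μ (fun ω => (X i ω, fun j : A => X j.1 ω)) := by
    refine entropy_congr μ hμ0 _ _ fun ω ω' => ⟨fun e => ?_, fun e => ?_⟩
    · refine Prod.ext (congrFun e ⟨i, Finset.mem_insert_self i A⟩)
        (funext fun j => congrFun e ⟨j.1, Finset.mem_insert_of_mem j.2⟩)
    · have h1 : X i ω = X i ω' := congrArg Prod.fst e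
      have h2 : (fun j : A => X j.1 ω) = (fun j : A => X j.1 ω') := congrArg Prod.snd e
      refine funext fun j => ?_
      obtain ⟨j, hj⟩ := j
      rcases Finset.mem_insert.mp hj with rfl | hjA
      · exact h1
      · exact congrFun h2 ⟨j, hjA⟩
  have e3 : F μ X B =
      entropy μ (fun ω => ((fun j : B => X j.1 ω), fun j : A => X j.1 ω)) := by
    refine entropy_congr μ hμ0 _ _ fun ω ω' => ⟨fun e => ?_, fun e => ?_⟩
    · exact Prod.ext (funext fun j => congrFun e j)
        (funext fun j => congrFun e ⟨j.1, hAB j.2⟩)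
    · exact funext fun j => congrFun (congrArg Prod.fst e) j
  rw [e1, e2, e3]
  exact entropy_submodular μ hμ0 hμ1 (X i) _ _

lemma filter_lt_succ_of_mem (A : Finset (Fin n)) (i : Fin n) (hi : i ∈ A) :
    A.filter (fun j : Fin n => (j : ℕ) < (i : ℕ) + 1) =
      insert i (A.filter (fun j : Fin n => (j : ℕ) < (i : ℕ))) := by
  ext j
  simp only [Finset.mem_filter, Finset.mem_insert, Nat.lt_succ_iff_lt_or_eq]
  constructor
  · rintro ⟨hjA, hlt | heq⟩
    · exact Or.inr ⟨hjA, hlt⟩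
    · exact Or.inl (Fin.ext heq)
  · rintro (rfl | ⟨hjA, hlt⟩)
    · exact ⟨hi, Or.inr rfl⟩
    · exact ⟨hjA, Or.inl hlt⟩

lemma filter_lt_succ_of_not_mem (A : Finset (Fin n)) (i : Fin n) (hi : i ∉ A) :
    A.filter (fun j : Fin n => (j : ℕ) < (i : ℕ) + 1) =
      A.filter (fun j : Fin n => (j : ℕ) < (i : ℕ)) := by
  ext j
  simp only [Finset.mem_filter, Nat.lt_succ_iff_lt_or_eq]
  constructor
  · rintro ⟨hjA, hlt | heq⟩
    · exact ⟨hjA, hlt⟩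
    · exact absurd ((Fin.ext heq : j = i) ▸ hjA) hi
  · rintro ⟨hjA, hlt⟩; exact ⟨hjA, Or.inl hlt⟩

/-- the conditional entropy of `X i` given the preceding variables. -/
noncomputable def cfn (i : Fin n) : ℝ :=
  F μ X (insert i (Finset.univ.filter (fun j : Fin n => (j : ℕ) < (i : ℕ)))) -
    F μ X (Finset.univ.filter (fun j : Fin n => (j : ℕ) < (i : ℕ)))

lemma cfn_nonneg (hμ0 : ∀ ω, 0 ≤ μ ω) (i : Fin n) : 0 ≤ cfn μ X i :=
  sub_nonneg.mpr (F_mono μ X hμ0 (Finset.subset_insert i _))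

lemma telescope (hμ1 : ∑ ω, μ ω = 1) (A : Finset (Fin n)) :
    F μ X A = ∑ t ∈ Finset.range n,
      (F μ X (A.filter (fun j : Fin n => (j : ℕ) < t + 1)) -
        F μ X (A.filter (fun j : Fin n => (j : ℕ) < t))) := by
  rw [Finset.sum_range_sub (fun t => F μ X (A.filter (fun j : Fin n => (j : ℕ) < t)))]
  rw [show A.filter (fun j : Fin n => (j : ℕ) < n) = A from
      Finset.filter_true_of_mem fun j _ => j.isLt,
    show A.filter (fun j : Fin n => (j : ℕ) < 0) = ∅ from
      Finset.filter_false_of_mem fun j _ => Nat.not_lt_zero _,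
    F_empty μ X hμ1, sub_zero]

lemma sum_cfn_le (hμ0 : ∀ ω, 0 ≤ μ ω) (hμ1 : ∑ ω, μ ω = 1) (A : Finset (Fin n)) :
    ∑ i ∈ A, cfn μ X i ≤ F μ X A := by
  have h1 : ∑ i ∈ A, cfn μ X i = ∑ i : Fin n, if i ∈ A then cfn μ X i else 0 := by
    rw [Finset.sum_ite_mem Finset.univ A (cfn μ X), Finset.univ_inter]
  rw [h1, telescope μ X hμ1 A,
    ← Fin.sum_univ_eq_sum_range (fun t =>
      F μ X (A.filter (fun j : Fin n => (j : ℕ) < t + 1)) -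
        F μ X (A.filter (fun j : Fin n => (j : ℕ) < t))) n]
  refine Finset.sum_le_sum fun i _ => ?_
  by_cases hi : i ∈ A
  · rw [if_pos hi, filter_lt_succ_of_mem A i hi]
    have hsub : A.filter (fun j : Fin n => (j : ℕ) < (i : ℕ)) ⊆
        Finset.univ.filter (fun j : Fin n => (j : ℕ) < (i : ℕ)) :=
      Finset.filter_subset_filter _ (Finset.subset_univ A)
    have := F_insert_sub μ X hμ0 hμ1 i hsub
    rw [cfn]
    linarith [this]
  · rw [if_neg hi, filter_lt_succ_of_not_mem A i hi, sub_self]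

lemma sum_cfn_univ (hμ0 : ∀ ω, 0 ≤ μ ω) (hμ1 : ∑ ω, μ ω = 1) :
    ∑ i, cfn μ X i = F μ X Finset.univ := by
  rw [telescope μ X hμ1 Finset.univ,
    ← Fin.sum_univ_eq_sum_range (fun t =>
      F μ X (Finset.univ.filter (fun j : Fin n => (j : ℕ) < t + 1)) -
        F μ X (Finset.univ.filter (fun j : Fin n => (j : ℕ) < t))) n]
  refine Finset.sum_congr rfl fun i _ => ?_
  rw [filter_lt_succ_of_mem Finset.univ i (Finset.mem_univ i), cfn]

end ShearerAux


open ShearerAux in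
/-- **Shearer's lemma.** If every index `i ∈ {1, …, n}` belongs to at least `k ≥ 1` of the
subsets `S 1, …, S m` of `{1, …, n}`, then
`k · H(X₁, …, Xₙ) ≤ ∑ⱼ H(X_{S j})`. -/
theorem shearer_lemma {Ω : Type*} [Fintype Ω] {n : ℕ} {α : Fin n → Type*}
    [∀ i, DecidableEq (α i)]
    (μ : Ω → ℝ) (hμ0 : ∀ ω, 0 ≤ μ ω) (hμ1 : ∑ ω, μ ω = 1)
    (X : ∀ i, Ω → α i) {m : ℕ} (S : Fin m → Finset (Fin n))
    (k : ℕ) (hk : 1 ≤ k)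
    (hcov : ∀ i : Fin n, k ≤ (Finset.univ.filter (fun j => i ∈ S j)).card) :
    (k : ℝ) * entropy μ (fun ω (i : Fin n) => X i ω)
      ≤ ∑ j, entropy μ (fun ω (i : S j) => X i.1 ω) := by
  classical
  have hL : entropy μ (fun ω (i : Fin n) => X i ω) = F μ X Finset.univ :=
    entropy_congr μ hμ0 _ _ (fun ω ω' =>
      ⟨fun e => funext fun i => congrFun e i.1,
       fun e => funext fun i => congrFun e ⟨i, Finset.mem_univ i⟩⟩)
  rw [hL]
  have hswap : ∑ j, ∑ i ∈ S j, cfn μ X i =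
      ∑ i, ((Finset.univ.filter (fun j => i ∈ S j)).card : ℝ) * cfn μ X i := by
    have h1 : ∀ j, ∑ i ∈ S j, cfn μ X i =
        ∑ i : Fin n, if i ∈ S j then cfn μ X i else 0 := by
      intro j
      rw [Finset.sum_ite_mem Finset.univ (S j) (cfn μ X), Finset.univ_inter]
    simp_rw [h1]
    rw [Finset.sum_comm]
    refine Finset.sum_congr rfl fun i _ => ?_
    rw [← Finset.sum_filter, Finset.sum_const, nsmul_eq_mul]
  calc (k : ℝ) * F μ X Finset.univ
      = (k : ℝ) * ∑ i, cfn μ X i := by rw [sum_cfn_univ μ X hμ0 hμ1]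
    _ = ∑ i, (k : ℝ) * cfn μ X i := Finset.mul_sum _ _ _
    _ ≤ ∑ i, ((Finset.univ.filter (fun j => i ∈ S j)).card : ℝ) * cfn μ X i :=
        Finset.sum_le_sum fun i _ => mul_le_mul_of_nonneg_right
          (Nat.cast_le.mpr (hcov i)) (cfn_nonneg μ X hμ0 i)
    _ = ∑ j, ∑ i ∈ S j, cfn μ X i := hswap.symm
    _ ≤ ∑ j, F μ X (S j) :=
        Finset.sum_le_sum fun j _ => sum_cfn_le μ X hμ0 hμ1 (S j)
    _ = ∑ j, entropy μ (fun ω (i : S j) => X i.1 ω) := rfl
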